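/- In the setting of the shift-case exponent bound proof: let v ∈ ℕ, e, k, n ∈ ℕ with e > k + n·v, and let q be a nonzero polynomial. Suppose polynomials b_n, b_{n-1}, …, b_0 satisfy: q^{e-k} divides b_n, and for each i < n there are polynomials c_i (with q-adic valuation of c_i at most v) and t_i such that q^e·t_i = b_i·c_i + (terms each divisible by q^{(i+1)v+1}). Then by downward induction q^{iv+1} divides b_i for all i = n, n-1, …, 0; in particular q divides gcd(b_0, …, b_n). -/

import Mathlib

open Polynomial

lemma pow_sub_dvd_of_dvd_mul {M : Type*} [CommMonoidWithZero M] [IsCancelMulZero M] {p : M} (hp : Prime p) :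
    ∀ (v m : ℕ) (a b : M), ¬ p ^ (v + 1) ∣ b → p ^ m ∣ a * b → p ^ (m - v) ∣ a := by
  intro v
  induction v with
  | zero =>
    intro m a b hb h
    rw [pow_one] at hb
    simpa using hp.pow_dvd_of_dvd_mul_right m hb h
  | succ v ih =>
    intro m a b hb h
    by_cases hpb : p ∣ b
    · obtain ⟨b', rfl⟩ := hpb
      have hb' : ¬ p ^ (v + 1) ∣ b' := by
        intro hd
        exact hb (by rw [pow_succ']; exact mul_dvd_mul_left p hd)
      rcases Nat.eq_zero_or_pos m with rfl | hm
      · simp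
      · obtain ⟨m', rfl⟩ := Nat.exists_eq_add_of_le hm
        have h2 : p ^ m' ∣ a * b' := by
          rw [Nat.add_comm, pow_succ, mul_comm (p ^ m') p, mul_left_comm a p b'] at h
          exact (mul_dvd_mul_iff_left hp.ne_zero).mp h
        have := ih m' a b' hb' h2
        have heq : 1 + m' - (v + 1) = m' - v := by omega
        rwa [heq]
    · have := hp.pow_dvd_of_dvd_mul_right m hpb h
      exact (pow_dvd_pow p (Nat.sub_le _ _)).trans this

/-- The induction at the heart of the shift-case exponent bound proof:
`q` irreducible, `e > k + n·v`, `q^{e-k} ∣ b_n`, and for each `i < n` there are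
`c_i` (nonzero with `q`-adic valuation at most `v`), `s_i` divisible by
`q^{(i+1)v+1}`, and `t_i` with `q^e·t_i = b_i·c_i + s_i`. Then
`q^{iv+1} ∣ b_i` for all `i ≤ n`; in particular `q` divides every `b_i`
(hence `q ∣ gcd(b_0,…,b_n)`). -/
theorem valuation_induction {K : Type*} [Field K] (q : Polynomial K) (hq : Irreducible q)
    (v e k n : ℕ) (he : k + n * v < e)
    (b : ℕ → Polynomial K)
    (hbn : q ^ (e - k) ∣ b n)
    (hstep : ∀ i, i < n → ∃ c s t : Polynomial K, c ≠ 0 ∧ ¬ q ^ (v + 1) ∣ c ∧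
      q ^ ((i + 1) * v + 1) ∣ s ∧ q ^ e * t = b i * c + s) :
    (∀ i, i ≤ n → q ^ (i * v + 1) ∣ b i) ∧ ∀ i, i ≤ n → q ∣ b i := by
  have hqp : Prime q := hq.prime
  have main : ∀ i, i ≤ n → q ^ (i * v + 1) ∣ b i := by
    intro i hi
    rcases eq_or_lt_of_le hi with rfl | hlt
    · exact (pow_dvd_pow q (by omega)).trans hbn
    · obtain ⟨c, s, t, hc0, hcv, hs, heq⟩ := hstep i hlt
      have hle : (i + 1) * v + 1 ≤ e := by nlinarith [Nat.succ_le_of_lt hlt]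
      have hdvd : q ^ ((i + 1) * v + 1) ∣ b i * c := by
        have h1 : q ^ ((i + 1) * v + 1) ∣ q ^ e * t :=
          ((pow_dvd_pow q hle).trans (dvd_mul_right _ _))
        have : b i * c = q ^ e * t - s := eq_sub_of_add_eq heq.symm
        rw [this]
        exact dvd_sub h1 hs
      have := pow_sub_dvd_of_dvd_mul hqp v ((i + 1) * v + 1) (b i) c hcv hdvd
      have heq2 : (i + 1) * v + 1 - v = i * v + 1 := by
        have : (i + 1) * v = i * v + v := by ring
        omega
      rwa [heq2] at this
  exact ⟨main, fun i hi => (dvd_pow_self q (Nat.succ_ne_zero _)).trans (main i hi)⟩
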